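/- Let f be an excursion. Then (i) the relation ⪯_f is a partial order on [0,1]; (ii) 0 is a root: 0 ⪯_f t for every t ∈ [0,1]; (iii) any two points have a most recent common ancestor: for all s,t ∈ [0,1] there is a unique u ∈ [0,1] such that for every r ∈ [0,1], r ⪯_f u if and only if (r ⪯_f s and r ⪯_f t); (iv) ancestral lineages are totally ordered: for every t ∈ [0,1], the relation ⪯_f restricted to {s ∈ [0,1] : s ⪯_f t} is a total order. -/

import Mathlib

open Set Filter Topology
open scoped Classical

noncomputable section

/-- Left limit of `f` at `t`, with the convention `f(0−) = 0`. -/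
def lm (f : ℝ → ℝ) (t : ℝ) : ℝ := if t = 0 then 0 else Function.leftLim f t

/-- The jump `Δ_t(f) = f t − f(t−)`. -/
def jump (f : ℝ → ℝ) (t : ℝ) : ℝ := f t - lm f t

/-- `inf_{[s,t]} f`. -/
def infIcc (f : ℝ → ℝ) (s t : ℝ) : ℝ := sInf (f '' Icc s t)

/-- An excursion: a càdlàg function on `[0,1]`, nonnegative, vanishing at `1` (and
extended by `0` outside `[0,1]`), all of whose jumps are nonnegative. -/
structure IsExcursion (f : ℝ → ℝ) : Prop where
  nonneg : ∀ t ∈ Icc (0:ℝ) 1, 0 ≤ f t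
  zero_outside : ∀ t, t ∉ Icc (0:ℝ) 1 → f t = 0
  rightCont : ∀ t ∈ Ico (0:ℝ) 1, Tendsto f (𝓝[>] t) (𝓝 (f t))
  leftLimEx : ∀ t ∈ Ioc (0:ℝ) 1, Tendsto f (𝓝[<] t) (𝓝 (Function.leftLim f t))
  one : f 1 = 0
  jump_nonneg : ∀ t ∈ Icc (0:ℝ) 1, 0 ≤ jump f t

/-- The genealogical relation `s ⪯_f t` : `s ≤ t` and `f(s−) ≤ inf_{[s,t]} f`. -/
def pre (f : ℝ → ℝ) (s t : ℝ) : Prop := s ≤ t ∧ lm f s ≤ infIcc f s t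

/-- `x_s^t(f) = 1_{s ≤ t} · max(inf_{[s,t]} f − f(s−), 0)`. -/
def xst (f : ℝ → ℝ) (s t : ℝ) : ℝ := if s ≤ t then max (infIcc f s t - lm f s) 0 else 0

/-- The most recent common ancestor `s ∧_f t`. -/
def mrca (f : ℝ → ℝ) (s t : ℝ) : ℝ := sSup {r : ℝ | 0 ≤ r ∧ pre f r s ∧ pre f r t}

/-- `δ_t(a,b) = min(|a−b|, Δ_t(f) − |a−b|)`, the circle pseudo-distance on `[0, Δ_t(f)]`. -/
def cdel (f : ℝ → ℝ) (t a b : ℝ) : ℝ := min |a - b| (jump f t - |a - b|)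

/-- `d_O(s,t) = ∑_{s ≺_f r ⪯_f t} δ_r(0, x_r^t)`. -/
def dO (f : ℝ → ℝ) (s t : ℝ) : ℝ :=
  ∑' r : ℝ, if pre f s r ∧ s < r ∧ pre f r t then cdel f r 0 (xst f r t) else 0

/-- `d_T(s,t) = f t − inf_{[s,t]} f − ∑_{s ≺_f r ⪯_f t} x_r^t`, intended for `s ⪯_f t`. -/
def dTanc (f : ℝ → ℝ) (s t : ℝ) : ℝ :=
  f t - infIcc f s t - ∑' r : ℝ, if pre f s r ∧ s < r ∧ pre f r t then xst f r t else 0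

/-- The looptree pseudo-distance `d_L[f]`. -/
def dL (f : ℝ → ℝ) (s t : ℝ) : ℝ :=
  cdel f (mrca f s t) (xst f (mrca f s t) s) (xst f (mrca f s t) t)
    + dO f (mrca f s t) s + dO f (mrca f s t) t

/-- The tree pseudo-distance `d_T[f]`. -/
def dT (f : ℝ → ℝ) (s t : ℝ) : ℝ := dTanc f (mrca f s t) s + dTanc f (mrca f s t) t

/-- The vernation pseudo-distance `d_V[f] = d_T[f] + 2·d_L[f]`. -/
def dV (f : ℝ → ℝ) (s t : ℝ) : ℝ := dT f s t + 2 * dL f s t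

/-- `Jf(t) = ∑_{r ⪯_f t} x_r^t(f)`. -/
def Jop (f : ℝ → ℝ) (t : ℝ) : ℝ := ∑' r : ℝ, if pre f r t then xst f r t else 0

/-- `J^ε f(t) = ∑_{r ⪯_f t, Δ_r(f) ≥ ε} x_r^t(f)`. -/
def Jeps (f : ℝ → ℝ) (ε : ℝ) (t : ℝ) : ℝ :=
  ∑' r : ℝ, if pre f r t ∧ ε ≤ jump f r then xst f r t else 0

/-- Pure jump growth (PJG) excursion: `f(t) = ∑_{r ⪯_f t} x_r^t(f)` on `[0,1]`. -/
def IsPJG (f : ℝ → ℝ) : Prop := ∀ t ∈ Icc (0:ℝ) 1, f t = Jop f t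

/-- An increasing bijection from `[0,1]` onto itself. -/
def IncBij (l : ℝ → ℝ) : Prop :=
  StrictMonoOn l (Icc (0:ℝ) 1) ∧ Set.BijOn l (Icc (0:ℝ) 1) (Icc (0:ℝ) 1)

/-- The Skorokhod distance `ρ` on functions `[0,1] → ℝ`. -/
def skor (f g : ℝ → ℝ) : ℝ :=
  sInf {c : ℝ | 0 ≤ c ∧ ∃ l : ℝ → ℝ, IncBij l ∧
    ∀ x ∈ Icc (0:ℝ) 1, |l x - x| ≤ c ∧ |f x - g (l x)| ≤ c}

section Aux

variable {f : ℝ → ℝ}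

lemma exc_nn (hf : IsExcursion f) (x : ℝ) : 0 ≤ f x := by
  by_cases h : x ∈ Icc (0:ℝ) 1
  · exact hf.nonneg x h
  · rw [hf.zero_outside x h]

lemma bddBelow_img (hf : IsExcursion f) (s t : ℝ) : BddBelow (f '' Icc s t) :=
  ⟨0, by rintro y ⟨x, -, rfl⟩; exact exc_nn hf x⟩

lemma infIcc_le (hf : IsExcursion f) {s t x : ℝ} (hx : x ∈ Icc s t) :
    infIcc f s t ≤ f x := csInf_le (bddBelow_img hf s t) ⟨x, hx, rfl⟩

lemma le_infIcc {s t c : ℝ} (h : s ≤ t) (H : ∀ x ∈ Icc s t, c ≤ f x) :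
    c ≤ infIcc f s t :=
  le_csInf ⟨f s, s, ⟨le_refl s, h⟩, rfl⟩ (by rintro y ⟨x, hx, rfl⟩; exact H x hx)

lemma infIcc_nonneg (hf : IsExcursion f) {s t : ℝ} (h : s ≤ t) : 0 ≤ infIcc f s t :=
  le_infIcc h fun x _ => exc_nn hf x

lemma infIcc_anti (hf : IsExcursion f) {a b c d : ℝ} (hab : a ≤ b)
    (h : Icc a b ⊆ Icc c d) : infIcc f c d ≤ infIcc f a b :=
  le_infIcc hab fun x hx => infIcc_le hf (h hx)

lemma lm_le_self (hf : IsExcursion f) {t : ℝ} (ht : t ∈ Icc (0:ℝ) 1) : lm f t ≤ f t := by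
  have := hf.jump_nonneg t ht; unfold jump at this; linarith

lemma pre_refl (hf : IsExcursion f) {t : ℝ} (ht : t ∈ Icc (0:ℝ) 1) : pre f t t := by
  refine ⟨le_refl t, ?_⟩
  have : infIcc f t t = f t := by
    unfold infIcc; rw [Icc_self, image_singleton, csInf_singleton]
  rw [this]; exact lm_le_self hf ht

lemma pre_root (hf : IsExcursion f) {t : ℝ} (ht : t ∈ Icc (0:ℝ) 1) : pre f 0 t := by
  refine ⟨ht.1, ?_⟩
  have : lm f 0 = 0 := if_pos rfl
  rw [this]; exact infIcc_nonneg hf ht.1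

lemma pre_of_le (hf : IsExcursion f) {s₁ s₂ t : ℝ} (h12 : s₁ ≤ s₂) (h2t : s₂ ≤ t)
    (h1 : pre f s₁ t) : pre f s₁ s₂ :=
  ⟨h12, h1.2.trans (infIcc_anti hf h12 (Icc_subset_Icc (le_refl _) h2t))⟩

lemma lm_le_lm (hf : IsExcursion f) {s t : ℝ} (hs : 0 ≤ s) (hst : s < t) (ht1 : t ≤ 1)
    (h : lm f s ≤ infIcc f s t) : lm f s ≤ lm f t := by
  have hlim := hf.leftLimEx t ⟨lt_of_le_of_lt hs hst, ht1⟩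
  have heq : lm f t = Function.leftLim f t := by
    unfold lm; rw [if_neg (ne_of_gt (lt_of_le_of_lt hs hst))]
  rw [heq]
  refine ge_of_tendsto hlim ?_
  have hmem : Ioo s t ∈ 𝓝[<] t := Ioo_mem_nhdsLT_of_mem ⟨hst, le_refl t⟩
  filter_upwards [hmem] with x hx
  exact h.trans (infIcc_le hf ⟨hx.1.le, hx.2.le⟩)

lemma pre_trans (hf : IsExcursion f) {s t r : ℝ} (hs : 0 ≤ s) (hr1 : r ≤ 1)
    (h1 : pre f s t) (h2 : pre f t r) : pre f s r := by
  have hsr : s ≤ r := h1.1.trans h2.1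
  refine ⟨hsr, le_infIcc hsr ?_⟩
  have key : lm f s ≤ infIcc f t r := by
    rcases eq_or_lt_of_le h1.1 with h | h
    · rw [h]; exact h2.2
    · exact (lm_le_lm hf hs h (h2.1.trans hr1) h1.2).trans h2.2
  intro x hx
  rcases le_or_gt x t with hxt | hxt
  · exact h1.2.trans (infIcc_le hf ⟨hx.1, hxt⟩)
  · exact key.trans (infIcc_le hf ⟨hxt.le, hx.2⟩)

lemma mrca_ex (hf : IsExcursion f) {s t : ℝ} (hs : s ∈ Icc (0:ℝ) 1) (ht : t ∈ Icc (0:ℝ) 1)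
    (hst : s ≤ t) : ∃ u ∈ Icc (0:ℝ) 1, pre f u s ∧ pre f u t ∧
      ∀ r, 0 ≤ r → pre f r s → pre f r t → pre f r u := by
  set A := {r : ℝ | 0 ≤ r ∧ pre f r s ∧ pre f r t} with hA
  have h0A : (0:ℝ) ∈ A := ⟨le_refl 0, pre_root hf hs, pre_root hf ht⟩
  have hbdd : BddAbove A := ⟨s, fun r hr => hr.2.1.1⟩
  set u := sSup A with hu
  have hu0 : 0 ≤ u := le_csSup hbdd h0A
  have hus : u ≤ s := csSup_le ⟨0, h0A⟩ fun r hr => hr.2.1.1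
  have hu1 : u ≤ 1 := hus.trans hs.2
  have hut' : u ≤ t := hus.trans hst
  have key : lm f u ≤ infIcc f u t := by
    by_cases huA : u ∈ A
    · exact huA.2.2.2
    · have hu0' : 0 < u := by
        rcases hu0.lt_or_eq with h | h
        · exact h
        · exact absurd (h ▸ h0A) huA
      have hlmu : lm f u = Function.leftLim f u := by unfold lm; rw [if_neg (ne_of_gt hu0')]
      have hlim : Tendsto f (𝓝[<] u) (𝓝 (Function.leftLim f u)) :=
        hf.leftLimEx u ⟨hu0', hu1⟩
      set L := Function.leftLim f u with hL
      rw [hlmu]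
      have hm0 : 0 ≤ infIcc f u t := infIcc_nonneg hf hut'
      refine le_of_forall_pos_le_add ?_
      intro ε hε
      have hev : {x : ℝ | L - ε < f x} ∈ 𝓝[<] u :=
        hlim (Ioi_mem_nhds (show L - ε < L by linarith))
      obtain ⟨l, hl, hIoo⟩ := mem_nhdsLT_iff_exists_Ioo_subset.1 hev
      obtain ⟨r, hrA, hlr⟩ := exists_lt_of_lt_csSup ⟨0, h0A⟩ hl
      have hru : r < u := lt_of_le_of_ne (le_csSup hbdd hrA) (fun h => huA (h ▸ hrA))
      have hrm : lm f r ≤ infIcc f u t :=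
        hrA.2.2.2.trans (infIcc_anti hf hut' (Icc_subset_Icc hru.le (le_refl t)))
      rcases eq_or_lt_of_le hrA.1 with hr0 | hr0
      · -- r = 0, so l < 0
        obtain ⟨x, hx1, hx2⟩ := exists_between (hr0 ▸ hlr : l < (0:ℝ))
        have hfx : L - ε < f x := hIoo ⟨hx1, hx2.trans (hr0 ▸ hru)⟩
        have : f x = 0 := hf.zero_outside x (fun hmem => absurd hmem.1 (not_le.2 hx2))
        linarith
      · have hlimr := hf.leftLimEx r ⟨hr0, hru.le.trans hu1⟩
        have hLr : L - ε ≤ Function.leftLim f r := by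
          refine ge_of_tendsto hlimr ?_
          have hmem : Ioo l r ∈ 𝓝[<] r := Ioo_mem_nhdsLT_of_mem ⟨hlr, le_refl r⟩
          filter_upwards [hmem] with x hx
          exact (hIoo ⟨hx.1, hx.2.trans hru⟩).le
        have heqr : lm f r = Function.leftLim f r := by unfold lm; rw [if_neg (ne_of_gt hr0)]
        rw [heqr] at hrm
        linarith
  have hut : pre f u t := ⟨hut', key⟩
  have huspre : pre f u s := pre_of_le hf hus hst hut
  refine ⟨u, ⟨hu0, hu1⟩, huspre, hut, ?_⟩
  intro r hr hrs hrt
  have hrA : r ∈ A := ⟨hr, hrs, hrt⟩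
  exact pre_of_le hf (le_csSup hbdd hrA) hut' hrt

end Aux
theorem statement0 (f : ℝ → ℝ) (hf : IsExcursion f) :
    (∀ t ∈ Icc (0:ℝ) 1, pre f t t) ∧
    (∀ s ∈ Icc (0:ℝ) 1, ∀ t ∈ Icc (0:ℝ) 1, pre f s t → pre f t s → s = t) ∧
    (∀ s ∈ Icc (0:ℝ) 1, ∀ t ∈ Icc (0:ℝ) 1, ∀ r ∈ Icc (0:ℝ) 1,
        pre f s t → pre f t r → pre f s r) ∧
    (∀ t ∈ Icc (0:ℝ) 1, pre f 0 t) ∧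
    (∀ s ∈ Icc (0:ℝ) 1, ∀ t ∈ Icc (0:ℝ) 1,
        ∃! u, u ∈ Icc (0:ℝ) 1 ∧
          ∀ r ∈ Icc (0:ℝ) 1, (pre f r u ↔ pre f r s ∧ pre f r t)) ∧
    (∀ t ∈ Icc (0:ℝ) 1, ∀ s₁ ∈ Icc (0:ℝ) 1, ∀ s₂ ∈ Icc (0:ℝ) 1,
        pre f s₁ t → pre f s₂ t → pre f s₁ s₂ ∨ pre f s₂ s₁) := by
  refine ⟨fun t ht => pre_refl hf ht, ?_, ?_, fun t ht => pre_root hf ht, ?_, ?_⟩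
  · exact fun s hs t ht h1 h2 => le_antisymm h1.1 h2.1
  · exact fun s hs t ht r hr h1 h2 => pre_trans hf hs.1 hr.2 h1 h2
  · intro s hs t ht
    have main : ∃ u ∈ Icc (0:ℝ) 1, ∀ r ∈ Icc (0:ℝ) 1,
        (pre f r u ↔ pre f r s ∧ pre f r t) := by
      rcases le_total s t with hst | hst
      · obtain ⟨u, huIcc, hus, hut, hmax⟩ := mrca_ex hf hs ht hst
        refine ⟨u, huIcc, fun r hr => ⟨fun hru => ?_, fun h => hmax r hr.1 h.1 h.2⟩⟩
        exact ⟨pre_trans hf hr.1 hs.2 hru hus, pre_trans hf hr.1 ht.2 hru hut⟩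
      · obtain ⟨u, huIcc, hut, hus, hmax⟩ := mrca_ex hf ht hs hst
        refine ⟨u, huIcc, fun r hr => ⟨fun hru => ?_, fun h => hmax r hr.1 h.2 h.1⟩⟩
        exact ⟨pre_trans hf hr.1 hs.2 hru hus, pre_trans hf hr.1 ht.2 hru hut⟩
    obtain ⟨u, huIcc, hiff⟩ := main
    refine ⟨u, ⟨huIcc, hiff⟩, ?_⟩
    rintro v ⟨hvIcc, hv⟩
    have hvst : pre f v s ∧ pre f v t := (hv v hvIcc).1 (pre_refl hf hvIcc)
    have hust : pre f u s ∧ pre f u t := (hiff u huIcc).1 (pre_refl hf huIcc)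
    have h1 : pre f v u := (hiff v hvIcc).2 hvst
    have h2 : pre f u v := (hv u huIcc).2 hust
    exact le_antisymm h1.1 h2.1
  · intro t ht s₁ hs₁ s₂ hs₂ hp1 hp2
    rcases le_total s₁ s₂ with h | h
    · exact Or.inl (pre_of_le hf h hp2.1 hp1)
    · exact Or.inr (pre_of_le hf h hp1.1 hp2)
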